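/- arXiv:0712.3735 — 2 statements merged into one kernel-verified Lean document; each statement's English description precedes it below -/
import Mathlib

section
/- For every m ≥ 1 and all coefficients a_1,…,a_{2m+1} ∈ ℝ, the function t = Σ_{j=1}^{2m+1} a_j φ_j satisfies ‖(t²)''‖_∞ ≤ 4π² D_m³ ‖t‖², i.e. sup_{x∈[0,1]} |(t²)''(x)| ≤ 4π² (2m+1)³ · Σ_j a_j². -/
open Real Finset

/-- The trigonometric system on `[0,1]`: `φ 1 = 1`, `φ (2j) x = √2 cos(2πjx)`,
`φ (2j+1) x = √2 sin(2πjx)` for `j ≥ 1`. -/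
noncomputable def phi (j : ℕ) (x : ℝ) : ℝ :=
  if j = 1 then 1
  else if j % 2 = 0 then Real.sqrt 2 * Real.cos (2 * Real.pi * (j / 2 : ℕ) * x)
  else Real.sqrt 2 * Real.sin (2 * Real.pi * ((j - 1) / 2 : ℕ) * x)

/-- Frequency of the `j`-th basis function. -/
def fr (j : ℕ) : ℕ := if j % 2 = 0 then j / 2 else (j - 1) / 2

/-- First derivative of `phi j`. -/
noncomputable def phi1 (j : ℕ) (x : ℝ) : ℝ :=
  if j = 1 then 0
  else if j % 2 = 0 then
    -(Real.sqrt 2 * (2 * Real.pi * (fr j : ℝ))) * Real.sin (2 * Real.pi * (fr j : ℝ) * x)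
  else (Real.sqrt 2 * (2 * Real.pi * (fr j : ℝ))) * Real.cos (2 * Real.pi * (fr j : ℝ) * x)

/-- Second derivative of `phi j`. -/
noncomputable def phi2 (j : ℕ) (x : ℝ) : ℝ :=
  if j = 1 then 0
  else if j % 2 = 0 then
    -(Real.sqrt 2 * (2 * Real.pi * (fr j : ℝ)) ^ 2) * Real.cos (2 * Real.pi * (fr j : ℝ) * x)
  else -(Real.sqrt 2 * (2 * Real.pi * (fr j : ℝ)) ^ 2) * Real.sin (2 * Real.pi * (fr j : ℝ) * x)

lemma hasDerivAt_lin (c x : ℝ) : HasDerivAt (fun y : ℝ => c * y) c x := by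
  simpa using (hasDerivAt_id x).const_mul c

lemma hasDerivAt_phi (j : ℕ) (x : ℝ) : HasDerivAt (phi j) (phi1 j x) x := by
  by_cases h1 : j = 1
  · have hphi : phi j = fun _ : ℝ => (1 : ℝ) := by funext y; simp [phi, h1]
    have hphi1 : phi1 j x = 0 := by simp [phi1, h1]
    rw [hphi, hphi1]
    exact hasDerivAt_const x 1
  · by_cases h2 : j % 2 = 0
    · have hfr : ((j / 2 : ℕ) : ℝ) = (fr j : ℝ) := by simp [fr, h2]
      set c : ℝ := 2 * Real.pi * (fr j : ℝ) with hc
      have hphi : phi j = fun y : ℝ => Real.sqrt 2 * Real.cos (c * y) := by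
        funext y; simp only [phi, h1, h2, if_false, if_true, hfr, ← hc]
      have hphi1 : phi1 j x = Real.sqrt 2 * (-Real.sin (c * x) * c) := by
        simp only [phi1, h1, h2, if_false, if_true, ← hc]; ring
      rw [hphi, hphi1]
      exact ((hasDerivAt_lin c x).cos).const_mul (Real.sqrt 2)
    · have hfr : (((j - 1) / 2 : ℕ) : ℝ) = (fr j : ℝ) := by simp [fr, h2]
      set c : ℝ := 2 * Real.pi * (fr j : ℝ) with hc
      have hphi : phi j = fun y : ℝ => Real.sqrt 2 * Real.sin (c * y) := by
        funext y; simp only [phi, h1, h2, if_false, hfr, ← hc]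
      have hphi1 : phi1 j x = Real.sqrt 2 * (Real.cos (c * x) * c) := by
        simp only [phi1, h1, h2, if_false, ← hc]; ring
      rw [hphi, hphi1]
      exact ((hasDerivAt_lin c x).sin).const_mul (Real.sqrt 2)

lemma hasDerivAt_phi1 (j : ℕ) (x : ℝ) : HasDerivAt (phi1 j) (phi2 j x) x := by
  by_cases h1 : j = 1
  · have hphi : phi1 j = fun _ : ℝ => (0 : ℝ) := by funext y; simp [phi1, h1]
    have hphi2 : phi2 j x = 0 := by simp [phi2, h1]
    rw [hphi, hphi2]
    exact hasDerivAt_const x 0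
  · set c : ℝ := 2 * Real.pi * (fr j : ℝ) with hc
    by_cases h2 : j % 2 = 0
    · have hphi : phi1 j = fun y : ℝ => -(Real.sqrt 2 * c) * Real.sin (c * y) := by
        funext y; simp only [phi1, h1, h2, if_false, if_true, ← hc]
      have hphi2 : phi2 j x = -(Real.sqrt 2 * c) * (Real.cos (c * x) * c) := by
        simp only [phi2, h1, h2, if_false, if_true, ← hc]; ring
      rw [hphi, hphi2]
      exact ((hasDerivAt_lin c x).sin).const_mul (-(Real.sqrt 2 * c))
    · have hphi : phi1 j = fun y : ℝ => (Real.sqrt 2 * c) * Real.cos (c * y) := by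
        funext y; simp only [phi1, h1, h2, if_false, ← hc]
      have hphi2 : phi2 j x = (Real.sqrt 2 * c) * (-Real.sin (c * x) * c) := by
        simp only [phi2, h1, h2, if_false, ← hc]; ring
      rw [hphi, hphi2]
      exact ((hasDerivAt_lin c x).cos).const_mul (Real.sqrt 2 * c)

lemma abs_phi_le (j : ℕ) (x : ℝ) : |phi j x| ≤ Real.sqrt 2 := by
  have h2 : (1 : ℝ) ≤ Real.sqrt 2 := by
    rw [show (1 : ℝ) = Real.sqrt 1 by simp]
    exact Real.sqrt_le_sqrt (by norm_num)
  have hs : (0 : ℝ) ≤ Real.sqrt 2 := Real.sqrt_nonneg 2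
  unfold phi
  split_ifs
  · simpa using h2
  · rw [abs_mul, abs_of_nonneg hs]
    nlinarith [Real.abs_cos_le_one (2 * Real.pi * ((j / 2 : ℕ) : ℝ) * x), abs_nonneg (Real.cos (2 * Real.pi * ((j / 2 : ℕ) : ℝ) * x))]
  · rw [abs_mul, abs_of_nonneg hs]
    nlinarith [Real.abs_sin_le_one (2 * Real.pi * (((j - 1) / 2 : ℕ) : ℝ) * x), abs_nonneg (Real.sin (2 * Real.pi * (((j - 1) / 2 : ℕ) : ℝ) * x))]

lemma abs_phi1_le (j : ℕ) (x : ℝ) :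
    |phi1 j x| ≤ Real.sqrt 2 * (2 * Real.pi * (fr j : ℝ)) := by
  have hs : (0 : ℝ) ≤ Real.sqrt 2 := Real.sqrt_nonneg 2
  have hk : (0 : ℝ) ≤ Real.sqrt 2 * (2 * Real.pi * (fr j : ℝ)) := by
    have := Real.pi_pos
    positivity
  unfold phi1
  split_ifs
  · simpa using hk
  · rw [abs_mul, abs_neg, abs_of_nonneg hk]
    nlinarith [Real.abs_sin_le_one (2 * Real.pi * (fr j : ℝ) * x), abs_nonneg (Real.sin (2 * Real.pi * (fr j : ℝ) * x))]
  · rw [abs_mul, abs_of_nonneg hk]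
    nlinarith [Real.abs_cos_le_one (2 * Real.pi * (fr j : ℝ) * x), abs_nonneg (Real.cos (2 * Real.pi * (fr j : ℝ) * x))]

lemma abs_phi2_le (j : ℕ) (x : ℝ) :
    |phi2 j x| ≤ Real.sqrt 2 * (2 * Real.pi * (fr j : ℝ)) ^ 2 := by
  have hs : (0 : ℝ) ≤ Real.sqrt 2 := Real.sqrt_nonneg 2
  have hk : (0 : ℝ) ≤ Real.sqrt 2 * (2 * Real.pi * (fr j : ℝ)) ^ 2 := by positivity
  unfold phi2
  split_ifs
  · simpa using hk
  · rw [abs_mul, abs_neg, abs_of_nonneg hk]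
    nlinarith [Real.abs_cos_le_one (2 * Real.pi * (fr j : ℝ) * x), abs_nonneg (Real.cos (2 * Real.pi * (fr j : ℝ) * x))]
  · rw [abs_mul, abs_neg, abs_of_nonneg hk]
    nlinarith [Real.abs_sin_le_one (2 * Real.pi * (fr j : ℝ) * x), abs_nonneg (Real.sin (2 * Real.pi * (fr j : ℝ) * x))]

lemma fr_even (i : ℕ) : fr (2 * i) = i := by
  unfold fr
  have : (2 * i) % 2 = 0 := by omega
  rw [if_pos this]
  omega
lemma fr_odd (i : ℕ) : fr (2 * i + 1) = i := by
  unfold fr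
  have h : ¬ (2 * i + 1) % 2 = 0 := by omega
  rw [if_neg h]
  omega

lemma sum_fr_sq (m : ℕ) :
    ∑ j ∈ Finset.Icc 1 (2 * m + 1), ((fr j : ℝ)) ^ 2 ≤ (m : ℝ) * (m + 1) * (2 * m + 1) / 3 := by
  induction m with
  | zero => simp [fr]
  | succ n ih =>
    have h1 : (1 : ℕ) ≤ 2 * n + 1 + 1 + 1 := by omega
    have h2 : (1 : ℕ) ≤ 2 * n + 1 + 1 := by omega
    have e : 2 * (n + 1) + 1 = (2 * n + 1 + 1) + 1 := by ring
    rw [e, Finset.sum_Icc_succ_top h1, Finset.sum_Icc_succ_top h2]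
    have f1 : fr (2 * n + 1 + 1) = n + 1 := by
      have : 2 * n + 1 + 1 = 2 * (n + 1) := by ring
      rw [this, fr_even]
    have f2 : fr (2 * n + 1 + 1 + 1) = n + 1 := by
      have : 2 * n + 1 + 1 + 1 = 2 * (n + 1) + 1 := by ring
      rw [this, fr_odd]
    rw [f1, f2]
    push_cast
    nlinarith [ih]

lemma sum_fr_four (m : ℕ) :
    ∑ j ∈ Finset.Icc 1 (2 * m + 1), ((fr j : ℝ)) ^ 4
      ≤ (2 * m + 1 : ℝ) * ((m : ℝ) * (m + 1)) ^ 2 / 5 := by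
  induction m with
  | zero => simp [fr]
  | succ n ih =>
    have h1 : (1 : ℕ) ≤ 2 * n + 1 + 1 + 1 := by omega
    have h2 : (1 : ℕ) ≤ 2 * n + 1 + 1 := by omega
    have e : 2 * (n + 1) + 1 = (2 * n + 1 + 1) + 1 := by ring
    rw [e, Finset.sum_Icc_succ_top h1, Finset.sum_Icc_succ_top h2]
    have f1 : fr (2 * n + 1 + 1) = n + 1 := by
      have : 2 * n + 1 + 1 = 2 * (n + 1) := by ring
      rw [this, fr_even]
    have f2 : fr (2 * n + 1 + 1 + 1) = n + 1 := by
      have : 2 * n + 1 + 1 + 1 = 2 * (n + 1) + 1 := by ring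
      rw [this, fr_odd]
    rw [f1, f2]
    push_cast
    nlinarith [ih, sq_nonneg ((n : ℝ) + 1)]

set_option maxHeartbeats 1000000 in
/-- For `t = Σ_{j=1}^{2m+1} a_j φ_j`, one has `‖(t²)''‖_∞ ≤ 4π² D_m³ ‖t‖²`, i.e.
`|(t²)''(x)| ≤ 4π² (2m+1)³ Σ_j a_j²` for every `x ∈ [0,1]`. -/
theorem trig_sq_second_deriv_sup_bound (m : ℕ) (hm : 1 ≤ m) (a : ℕ → ℝ) (x : ℝ)
    (hx : x ∈ Set.Icc (0 : ℝ) 1) :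
    |deriv (deriv (fun y => (∑ j ∈ Finset.Icc 1 (2 * m + 1), a j * phi j y) ^ 2)) x|
      ≤ 4 * Real.pi ^ 2 * (2 * m + 1 : ℝ) ^ 3 * ∑ j ∈ Finset.Icc 1 (2 * m + 1), (a j) ^ 2 := by
  classical
  set s : Finset ℕ := Finset.Icc 1 (2 * m + 1) with hs
  -- derivative computations
  have hT : ∀ y : ℝ, HasDerivAt (fun y => ∑ j ∈ s, a j * phi j y)
      (∑ j ∈ s, a j * phi1 j y) y := fun y =>
    HasDerivAt.fun_sum fun j _ => (hasDerivAt_phi j y).const_mul (a j)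
  have hT1 : ∀ y : ℝ, HasDerivAt (fun y => ∑ j ∈ s, a j * phi1 j y)
      (∑ j ∈ s, a j * phi2 j y) y := fun y =>
    HasDerivAt.fun_sum fun j _ => (hasDerivAt_phi1 j y).const_mul (a j)
  have hd1 : deriv (fun y => (∑ j ∈ s, a j * phi j y) ^ 2)
      = fun y => (2 * (∑ j ∈ s, a j * phi j y)) * (∑ j ∈ s, a j * phi1 j y) := by
    funext y
    have h := ((hT y).fun_pow 2).deriv
    rw [h]; ring
  have hd2 : HasDerivAt
      (fun y => (2 * (∑ j ∈ s, a j * phi j y)) * (∑ j ∈ s, a j * phi1 j y))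
      ((2 * (∑ j ∈ s, a j * phi1 j x)) * (∑ j ∈ s, a j * phi1 j x)
        + (2 * (∑ j ∈ s, a j * phi j x)) * (∑ j ∈ s, a j * phi2 j x)) x :=
    ((hT x).const_mul 2).mul (hT1 x)
  rw [hd1, hd2.deriv]
  -- abbreviations
  set T0 : ℝ := ∑ j ∈ s, a j * phi j x with hT0
  set T1 : ℝ := ∑ j ∈ s, a j * phi1 j x with hT1d
  set T2 : ℝ := ∑ j ∈ s, a j * phi2 j x with hT2d
  set S : ℝ := ∑ j ∈ s, (a j) ^ 2 with hSd
  set L1 : ℝ := ∑ j ∈ s, |a j| with hL1d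
  set P1 : ℝ := ∑ j ∈ s, |a j| * (fr j : ℝ) with hP1d
  set P2 : ℝ := ∑ j ∈ s, |a j| * ((fr j : ℝ)) ^ 2 with hP2d
  have hSnn : 0 ≤ S := Finset.sum_nonneg fun j _ => sq_nonneg _
  have hL1nn : 0 ≤ L1 := Finset.sum_nonneg fun j _ => abs_nonneg _
  have hP1nn : 0 ≤ P1 := Finset.sum_nonneg fun j _ =>
    mul_nonneg (abs_nonneg _) (by positivity)
  have hP2nn : 0 ≤ P2 := Finset.sum_nonneg fun j _ =>
    mul_nonneg (abs_nonneg _) (by positivity)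
  have hpi : (0 : ℝ) < Real.pi := Real.pi_pos
  have hsqrt2 : Real.sqrt 2 ^ 2 = 2 := Real.sq_sqrt (by norm_num)
  have hsqrt2nn : (0 : ℝ) ≤ Real.sqrt 2 := Real.sqrt_nonneg 2
  -- pointwise bounds on the three sums
  have hb0 : |T0| ≤ Real.sqrt 2 * L1 := by
    calc |T0| ≤ ∑ j ∈ s, |a j * phi j x| := Finset.abs_sum_le_sum_abs _ _
    _ ≤ ∑ j ∈ s, Real.sqrt 2 * |a j| := by
        apply Finset.sum_le_sum
        intro j _
        rw [abs_mul, mul_comm]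
        exact mul_le_mul_of_nonneg_right (abs_phi_le j x) (abs_nonneg _)
    _ = Real.sqrt 2 * L1 := by rw [hL1d, Finset.mul_sum]
  have hb1 : |T1| ≤ Real.sqrt 2 * (2 * Real.pi) * P1 := by
    calc |T1| ≤ ∑ j ∈ s, |a j * phi1 j x| := Finset.abs_sum_le_sum_abs _ _
    _ ≤ ∑ j ∈ s, Real.sqrt 2 * (2 * Real.pi) * (|a j| * (fr j : ℝ)) := by
        apply Finset.sum_le_sum
        intro j _
        rw [abs_mul]
        calc |a j| * |phi1 j x| ≤ |a j| * (Real.sqrt 2 * (2 * Real.pi * (fr j : ℝ))) :=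
              mul_le_mul_of_nonneg_left (abs_phi1_le j x) (abs_nonneg _)
        _ = Real.sqrt 2 * (2 * Real.pi) * (|a j| * (fr j : ℝ)) := by ring
    _ = Real.sqrt 2 * (2 * Real.pi) * P1 := by rw [hP1d, Finset.mul_sum]
  have hb2 : |T2| ≤ Real.sqrt 2 * (2 * Real.pi) ^ 2 * P2 := by
    calc |T2| ≤ ∑ j ∈ s, |a j * phi2 j x| := Finset.abs_sum_le_sum_abs _ _
    _ ≤ ∑ j ∈ s, Real.sqrt 2 * (2 * Real.pi) ^ 2 * (|a j| * ((fr j : ℝ)) ^ 2) := by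
        apply Finset.sum_le_sum
        intro j _
        rw [abs_mul]
        calc |a j| * |phi2 j x| ≤ |a j| * (Real.sqrt 2 * (2 * Real.pi * (fr j : ℝ)) ^ 2) :=
              mul_le_mul_of_nonneg_left (abs_phi2_le j x) (abs_nonneg _)
        _ = Real.sqrt 2 * (2 * Real.pi) ^ 2 * (|a j| * ((fr j : ℝ)) ^ 2) := by ring
    _ = Real.sqrt 2 * (2 * Real.pi) ^ 2 * P2 := by rw [hP2d, Finset.mul_sum]
  -- Cauchy-Schwarz bounds
  have hcard : ∑ j ∈ s, (1 : ℝ) ^ 2 = (2 * m + 1 : ℝ) := by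
    simp [hs, Nat.card_Icc]
  have habs_sq : ∑ j ∈ s, |a j| ^ 2 = S := by
    rw [hSd]; exact Finset.sum_congr rfl fun j _ => sq_abs (a j)
  have hcsL1 : L1 ^ 2 ≤ S * (2 * m + 1 : ℝ) := by
    have h := Finset.sum_mul_sq_le_sq_mul_sq s (fun j => |a j|) (fun _ => (1 : ℝ))
    have e1 : ∑ j ∈ s, |a j| * 1 = L1 := by simp [hL1d]
    rw [e1, hcard, habs_sq] at h
    exact h
  have hcsP1 : P1 ^ 2 ≤ S * ((m : ℝ) * (m + 1) * (2 * m + 1) / 3) := by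
    have h := Finset.sum_mul_sq_le_sq_mul_sq s (fun j => |a j|) (fun j => (fr j : ℝ))
    rw [habs_sq] at h
    calc P1 ^ 2 ≤ S * ∑ j ∈ s, ((fr j : ℝ)) ^ 2 := h
    _ ≤ S * ((m : ℝ) * (m + 1) * (2 * m + 1) / 3) :=
        mul_le_mul_of_nonneg_left (sum_fr_sq m) hSnn
  have hcsP2 : P2 ^ 2 ≤ S * ((2 * m + 1 : ℝ) * ((m : ℝ) * (m + 1)) ^ 2 / 5) := by
    have h := Finset.sum_mul_sq_le_sq_mul_sq s (fun j => |a j|) (fun j => ((fr j : ℝ)) ^ 2)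
    rw [habs_sq] at h
    have h2 : ∑ j ∈ s, (((fr j : ℝ)) ^ 2) ^ 2 = ∑ j ∈ s, ((fr j : ℝ)) ^ 4 := by
      exact Finset.sum_congr rfl fun j _ => by ring
    rw [h2] at h
    calc P2 ^ 2 ≤ S * ∑ j ∈ s, ((fr j : ℝ)) ^ 4 := h
    _ ≤ S * ((2 * m + 1 : ℝ) * ((m : ℝ) * (m + 1)) ^ 2 / 5) :=
        mul_le_mul_of_nonneg_left (sum_fr_four m) hSnn
  -- key product bound : L1 * P2 ≤ S * (2m+1) * m(m+1) / 2
  have hmR : (1 : ℝ) ≤ (m : ℝ) := by exact_mod_cast hm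
  have hprod : L1 * P2 ≤ S * (2 * m + 1 : ℝ) * ((m : ℝ) * (m + 1)) / 2 := by
    nlinarith [hcsL1, hcsP2, hL1nn, hP2nn, hSnn, mul_nonneg hL1nn hP2nn,
      sq_nonneg (L1 * P2), sq_nonneg (S * (2 * m + 1 : ℝ) * ((m : ℝ) * (m + 1)) / 2 - L1 * P2),
      mul_nonneg (mul_nonneg hSnn (by positivity : (0:ℝ) ≤ (2 * m + 1 : ℝ)))
        (by positivity : (0:ℝ) ≤ (m : ℝ) * (m + 1))]
  -- main estimate
  have key : P1 ^ 2 + L1 * P2 ≤ (2 * m + 1 : ℝ) ^ 3 * S / 4 := by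
    nlinarith [hcsP1, hprod, hSnn, hmR]
  have h22 : Real.sqrt 2 * Real.sqrt 2 = 2 := Real.mul_self_sqrt (by norm_num)
  have habs : |(2 * T1) * T1 + (2 * T0) * T2| ≤ 2 * T1 ^ 2 + 2 * (|T0| * |T2|) := by
    calc |(2 * T1) * T1 + (2 * T0) * T2| ≤ |(2 * T1) * T1| + |(2 * T0) * T2| := abs_add_le _ _
    _ = 2 * |T1| * |T1| + 2 * |T0| * |T2| := by
        rw [abs_mul, abs_mul, abs_mul, abs_mul, abs_two]
    _ = 2 * T1 ^ 2 + 2 * (|T0| * |T2|) := by rw [← sq_abs T1]; ring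
  have hub : 2 * T1 ^ 2 + 2 * (|T0| * |T2|) ≤ 16 * Real.pi ^ 2 * (P1 ^ 2 + L1 * P2) := by
    have h1 : T1 ^ 2 ≤ 8 * Real.pi ^ 2 * P1 ^ 2 := by
      have h : T1 ^ 2 ≤ (Real.sqrt 2 * (2 * Real.pi) * P1) ^ 2 := by
        rw [← sq_abs T1]
        exact pow_le_pow_left₀ (abs_nonneg _) hb1 2
      calc T1 ^ 2 ≤ (Real.sqrt 2 * (2 * Real.pi) * P1) ^ 2 := h
      _ = 8 * Real.pi ^ 2 * P1 ^ 2 := by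
          rw [mul_pow, mul_pow, hsqrt2]; ring
    have h2 : |T0| * |T2| ≤ 8 * Real.pi ^ 2 * (L1 * P2) := by
      have e : Real.sqrt 2 * L1 * (Real.sqrt 2 * (2 * Real.pi) ^ 2 * P2)
          = 8 * Real.pi ^ 2 * (L1 * P2) := by
        linear_combination (4 * Real.pi ^ 2 * L1 * P2) * h22
      calc |T0| * |T2| ≤ Real.sqrt 2 * L1 * (Real.sqrt 2 * (2 * Real.pi) ^ 2 * P2) :=
            mul_le_mul hb0 hb2 (abs_nonneg T2) (by positivity)
      _ = 8 * Real.pi ^ 2 * (L1 * P2) := e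
    nlinarith [h1, h2]
  calc |(2 * T1) * T1 + (2 * T0) * T2| ≤ 2 * T1 ^ 2 + 2 * (|T0| * |T2|) := habs
  _ ≤ 16 * Real.pi ^ 2 * (P1 ^ 2 + L1 * P2) := hub
  _ ≤ 16 * Real.pi ^ 2 * ((2 * m + 1 : ℝ) ^ 3 * S / 4) :=
      mul_le_mul_of_nonneg_left key (by positivity)
  _ = 4 * Real.pi ^ 2 * (2 * m + 1 : ℝ) ^ 3 * S := by ring
end

section
/- Let (φ_j)_{j=1}^{D} be bounded measurable functions on [0,1] that are orthonormal in L²([0,1], dx) and satisfy Σ_{j=1}^{D} φ_j(x)² ≤ D for all x ∈ [0,1]. Let U_0,…,U_{N−1} be random variables with values in [0,1] and Z_1,…,Z_N square-integrable real random variables such that the pairs (U_i, Z_{i+1}) are identically distributed in i and, for every j and all 0 ≤ i, ℓ ≤ N−1 with ℓ ≥ i + 2, E[φ_j(U_i) Z_{i+1}] = 0 and E[φ_j(U_i) Z_{i+1} · φ_j(U_ℓ) Z_{ℓ+1}] = 0. Define ν_N(t) = (1/N) Σ_{i=0}^{N−1} t(U_i) Z_{i+1} for t in the linear span S of φ_1,…,φ_D.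 Then E[ sup { ν_N(t)² : t ∈ S, ‖t‖_{L²([0,1])} ≤ 1 } ] ≤ 3 D E[Z_1²]/N. -/
open MeasureTheory Finset

/-- Abstract version of Lemma 3 of the paper: for an orthonormal system `(φ_j)_{j<D}` of
bounded measurable functions on `[0,1]` with `Σ_j φ_j(x)² ≤ D`, design variables `U_i` with
values in `[0,1]` and noise variables `Z_{i+1}` such that the pairs `(U_i, Z_{i+1})` are
identically distributed and the terms `φ_j(U_i)Z_{i+1}` are centered with vanishing
correlations at all lags `≥ 2`, the empirical process `ν_N(t) = (1/N) Σ_i t(U_i) Z_{i+1}`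
satisfies `E[sup {ν_N(t)² : t ∈ span(φ), ‖t‖_{L²([0,1])} ≤ 1}] ≤ 3 D E[Z_1²]/N`. -/
theorem empirical_process_sup_bound {Ω : Type*} [MeasurableSpace Ω] (P : Measure Ω)
    [IsProbabilityMeasure P] (D N : ℕ) (hD : 1 ≤ D) (hN : 1 ≤ N)
    (φ : Fin D → ℝ → ℝ)
    (hφmeas : ∀ j, Measurable (φ j))
    (hφbdd : ∀ j, ∃ C : ℝ, ∀ x ∈ Set.Icc (0 : ℝ) 1, |φ j x| ≤ C)
    (hortho : ∀ j j' : Fin D,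
      ∫ x in (0 : ℝ)..1, φ j x * φ j' x = if j = j' then 1 else 0)
    (hsum : ∀ x ∈ Set.Icc (0 : ℝ) 1, ∑ j, (φ j x) ^ 2 ≤ (D : ℝ))
    (U Z : ℕ → Ω → ℝ)
    (hUmeas : ∀ i, Measurable (U i)) (hZmeas : ∀ i, Measurable (Z i))
    (hUrange : ∀ i, i < N → ∀ ω, U i ω ∈ Set.Icc (0 : ℝ) 1)
    (hZ2 : ∀ i, 1 ≤ i → i ≤ N → MemLp (Z i) 2 P)
    (hid : ∀ i, i < N → Measure.map (fun ω => (U i ω, Z (i + 1) ω)) P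
      = Measure.map (fun ω => (U 0 ω, Z 1 ω)) P)
    (hcentered : ∀ (j : Fin D) (i : ℕ), i < N → ∫ ω, φ j (U i ω) * Z (i + 1) ω ∂P = 0)
    (horth : ∀ (j : Fin D) (i ℓ : ℕ), i < N → ℓ < N → i + 2 ≤ ℓ →
      ∫ ω, (φ j (U i ω) * Z (i + 1) ω) * (φ j (U ℓ ω) * Z (ℓ + 1) ω) ∂P = 0) :
    ∫ ω, (⨆ a : {a : Fin D → ℝ //
          ∫ x in (0 : ℝ)..1, (∑ j, a j * φ j x) ^ 2 ≤ 1},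
        ((N : ℝ)⁻¹ * ∑ i ∈ Finset.range N,
          (∑ j, (a : Fin D → ℝ) j * φ j (U i ω)) * Z (i + 1) ω) ^ 2) ∂P
      ≤ 3 * D * (∫ ω, (Z 1 ω) ^ 2 ∂P) / N := by
  have hNpos : (0 : ℝ) < N := by exact_mod_cast hN
  -- the basic random variables
  set X : Fin D → ℕ → Ω → ℝ := fun j i ω => φ j (U i ω) * Z (i + 1) ω with hX
  have hXmeas : ∀ j i, Measurable (X j i) := fun j i =>
    ((hφmeas j).comp (hUmeas i)).mul (hZmeas (i + 1))
  have hXL2 : ∀ (j : Fin D) (i : ℕ), i < N → MemLp (X j i) 2 P := by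
    intro j i hi
    obtain ⟨C, hC⟩ := hφbdd j
    refine MemLp.of_le_mul (c := C) (hZ2 (i + 1) (by omega) (by omega))
      (hXmeas j i).aestronglyMeasurable ?_
    filter_upwards with ω
    have h1 := hC _ (hUrange i hi ω)
    simp only [hX, Real.norm_eq_abs, abs_mul]
    exact mul_le_mul_of_nonneg_right h1 (abs_nonneg _)
  have hXsq_int : ∀ (j : Fin D) (i : ℕ), i < N → Integrable (fun ω => X j i ω ^ 2) P :=
    fun j i hi => (hXL2 j i hi).integrable_sq
  set m : Fin D → ℝ := fun j => ∫ ω, X j 0 ω ^ 2 ∂P with hm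
  have hm_nonneg : ∀ j, 0 ≤ m j := fun j => integral_nonneg fun ω => sq_nonneg _
  -- identical distribution
  have hident : ∀ (j : Fin D) (i : ℕ), i < N → ∫ ω, X j i ω ^ 2 ∂P = m j := by
    intro j i hi
    have hmap : ∀ k, k < N → ∫ ω, X j k ω ^ 2 ∂P
        = ∫ p : ℝ × ℝ, (φ j p.1 * p.2) ^ 2
            ∂(Measure.map (fun ω => (U k ω, Z (k + 1) ω)) P) := by
      intro k hk
      have hgm : Measurable (fun p : ℝ × ℝ => (φ j p.1 * p.2) ^ 2) :=
        (((hφmeas j).comp measurable_fst).mul measurable_snd).pow_const 2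
      rw [integral_map ((hUmeas k).prodMk (hZmeas (k + 1))).aemeasurable
        hgm.aestronglyMeasurable]
    rw [hmap i hi, hid i hi, ← hid 0 hN, ← hmap 0 hN]
  -- products are integrable
  have hXmul_int : ∀ (j : Fin D) (i ℓ : ℕ), i < N → ℓ < N →
      Integrable (fun ω => X j i ω * X j ℓ ω) P := by
    intro j i ℓ hi hℓ
    refine Integrable.mono' (((hXsq_int j i hi).add (hXsq_int j ℓ hℓ)).div_const 2)
      ((hXmeas j i).mul (hXmeas j ℓ)).aestronglyMeasurable ?_
    filter_upwards with ω
    rw [Real.norm_eq_abs, abs_mul]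
    have h := two_mul_le_add_sq |X j i ω| |X j ℓ ω|
    rw [sq_abs, sq_abs] at h
    simp only [Pi.add_apply]
    linarith
  have hcov_le : ∀ (j : Fin D) (i ℓ : ℕ), i < N → ℓ < N →
      ∫ ω, X j i ω * X j ℓ ω ∂P ≤ m j := by
    intro j i ℓ hi hℓ
    calc ∫ ω, X j i ω * X j ℓ ω ∂P
        ≤ ∫ ω, (X j i ω ^ 2 + X j ℓ ω ^ 2) / 2 ∂P := by
          refine integral_mono (hXmul_int j i ℓ hi hℓ)
            (((hXsq_int j i hi).add (hXsq_int j ℓ hℓ)).div_const 2) fun ω => ?_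
          nlinarith [sq_nonneg (X j i ω - X j ℓ ω)]
      _ = m j := by
          rw [integral_div, integral_add (hXsq_int j i hi) (hXsq_int j ℓ hℓ),
            hident j i hi, hident j ℓ hℓ]
          ring
  -- second moment of the sum
  have hSsq : ∀ j : Fin D,
      ∫ ω, (∑ i ∈ range N, X j i ω) ^ 2 ∂P ≤ 3 * N * m j := by
    intro j
    have expand : ∀ ω, (∑ i ∈ range N, X j i ω) ^ 2
        = ∑ p ∈ range N ×ˢ range N, X j p.1 ω * X j p.2 ω := by
      intro ω
      rw [sq, Finset.sum_mul_sum, Finset.sum_product]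
    have hmem : ∀ p ∈ range N ×ˢ range N, p.1 < N ∧ p.2 < N := by
      intro p hp
      rw [Finset.mem_product, Finset.mem_range, Finset.mem_range] at hp
      exact hp
    have step1 : ∫ ω, (∑ i ∈ range N, X j i ω) ^ 2 ∂P
        = ∑ p ∈ range N ×ˢ range N, ∫ ω, X j p.1 ω * X j p.2 ω ∂P := by
      simp_rw [expand]
      exact integral_finset_sum _ fun p hp => hXmul_int j p.1 p.2 (hmem p hp).1 (hmem p hp).2
    have step2 : ∑ p ∈ range N ×ˢ range N, ∫ ω, X j p.1 ω * X j p.2 ω ∂P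
        = ∑ p ∈ (range N ×ˢ range N).filter (fun p => p.1 ≤ p.2 + 1 ∧ p.2 ≤ p.1 + 1),
            ∫ ω, X j p.1 ω * X j p.2 ω ∂P := by
      refine (Finset.sum_subset (Finset.filter_subset _ _) ?_).symm
      intro p hp hp1
      have h := hmem p hp
      have hc : ¬(p.1 ≤ p.2 + 1 ∧ p.2 ≤ p.1 + 1) := by
        intro hc
        exact hp1 (Finset.mem_filter.mpr ⟨hp, hc⟩)
      rcases not_and_or.mp hc with h1 | h2
      · have hle : p.2 + 2 ≤ p.1 := by omega
        have hz := horth j p.2 p.1 h.2 h.1 hle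
        simp_rw [mul_comm] at hz ⊢
        exact hz
      · have hle : p.1 + 2 ≤ p.2 := by omega
        exact horth j p.1 p.2 h.1 h.2 hle
    have hcard : ((range N ×ˢ range N).filter
        (fun p => p.1 ≤ p.2 + 1 ∧ p.2 ≤ p.1 + 1)).card ≤ 3 * N := by
      have hinj : ∀ p ∈ (range N ×ˢ range N).filter
            (fun p => p.1 ≤ p.2 + 1 ∧ p.2 ≤ p.1 + 1),
          ∀ q ∈ (range N ×ˢ range N).filter
            (fun p => p.1 ≤ p.2 + 1 ∧ p.2 ≤ p.1 + 1),
          (fun p : ℕ × ℕ => (p.1, p.2 + 1 - p.1)) p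
            = (fun p : ℕ × ℕ => (p.1, p.2 + 1 - p.1)) q → p = q := by
        intro p hp q hq h
        simp only [Finset.mem_filter, Finset.mem_product, Finset.mem_range] at hp hq
        simp only [Prod.mk.injEq] at h
        obtain ⟨h1, h2⟩ := h
        have hpa := hp.2.1
        have hqa := hq.2.1
        have h3 : p.2 = q.2 := by omega
        exact Prod.ext h1 h3
      have hmaps : ∀ p ∈ (range N ×ˢ range N).filter
            (fun p => p.1 ≤ p.2 + 1 ∧ p.2 ≤ p.1 + 1),
          (fun p : ℕ × ℕ => (p.1, p.2 + 1 - p.1)) p ∈ range N ×ˢ range 3 := by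
        intro p hp
        simp only [Finset.mem_filter, Finset.mem_product, Finset.mem_range] at hp
        rw [Finset.mem_product, Finset.mem_range, Finset.mem_range]
        refine ⟨hp.1.1, ?_⟩
        show p.2 + 1 - p.1 < 3
        omega
      have hc2 := Finset.card_le_card_of_injOn _ hmaps hinj
      simpa [Finset.card_product, mul_comm] using hc2
    have step3 : ∑ p ∈ (range N ×ˢ range N).filter
          (fun p => p.1 ≤ p.2 + 1 ∧ p.2 ≤ p.1 + 1),
        ∫ ω, X j p.1 ω * X j p.2 ω ∂P ≤ 3 * N * m j := by
      calc ∑ p ∈ (range N ×ˢ range N).filter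
              (fun p => p.1 ≤ p.2 + 1 ∧ p.2 ≤ p.1 + 1),
            ∫ ω, X j p.1 ω * X j p.2 ω ∂P
          ≤ ∑ _p ∈ (range N ×ˢ range N).filter
              (fun p => p.1 ≤ p.2 + 1 ∧ p.2 ≤ p.1 + 1), m j := by
            refine Finset.sum_le_sum fun p hp => ?_
            simp only [Finset.mem_filter, Finset.mem_product, Finset.mem_range] at hp
            exact hcov_le j p.1 p.2 hp.1.1 hp.1.2
        _ = ((range N ×ˢ range N).filter
              (fun p => p.1 ≤ p.2 + 1 ∧ p.2 ≤ p.1 + 1)).card * m j := by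
            rw [Finset.sum_const, nsmul_eq_mul]
        _ ≤ (3 * N : ℕ) * m j := by
            have : (((range N ×ˢ range N).filter
                (fun p => p.1 ≤ p.2 + 1 ∧ p.2 ≤ p.1 + 1)).card : ℝ) ≤ ((3 * N : ℕ) : ℝ) := by
              exact_mod_cast hcard
            exact mul_le_mul_of_nonneg_right this (hm_nonneg j)
        _ = 3 * N * m j := by push_cast; ring
    rw [step1, step2]; exact step3
  -- the dominating integrable function
  set g : Ω → ℝ := fun ω => ∑ j, ((N : ℝ)⁻¹ * ∑ i ∈ range N, X j i ω) ^ 2 with hg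
  have hterm_int : ∀ j : Fin D,
      Integrable (fun ω => ((N : ℝ)⁻¹ * ∑ i ∈ range N, X j i ω) ^ 2) P := by
    intro j
    have hSL2 : MemLp (fun ω => ∑ i ∈ range N, X j i ω) 2 P := by
      have h := memLp_finset_sum' (range N) fun i hi => hXL2 j i (Finset.mem_range.mp hi)
      have heq : (∑ i ∈ range N, X j i) = fun ω => ∑ i ∈ range N, X j i ω := by
        funext ω; simp
      rwa [heq] at h
    have := (hSL2.const_mul ((N : ℝ)⁻¹)).integrable_sq
    simpa using this
  have hg_int : Integrable g P := integrable_finset_sum _ fun j _ => hterm_int j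
  -- the L² norm identity on the approximation space
  have hii : ∀ j j' : Fin D, IntervalIntegrable (fun x => φ j x * φ j' x)
      MeasureTheory.volume 0 1 := by
    intro j j'
    obtain ⟨C, hC⟩ := hφbdd j
    obtain ⟨C', hC'⟩ := hφbdd j'
    rw [intervalIntegrable_iff_integrableOn_Ioc_of_le (by norm_num)]
    refine Integrable.mono' (g := fun _ => C * C')
      (integrableOn_const measure_Ioc_lt_top.ne)
      ((hφmeas j).mul (hφmeas j')).aestronglyMeasurable ?_
    rw [ae_restrict_iff' measurableSet_Ioc]
    filter_upwards with x hx
    have hx' : x ∈ Set.Icc (0 : ℝ) 1 := Set.Ioc_subset_Icc_self hx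
    rw [Real.norm_eq_abs, abs_mul]
    exact mul_le_mul (hC x hx') (hC' x hx') (abs_nonneg _) ((abs_nonneg _).trans (hC x hx'))
  have hnorm : ∀ a : Fin D → ℝ,
      ∫ x in (0 : ℝ)..1, (∑ j, a j * φ j x) ^ 2 = ∑ j, a j ^ 2 := by
    intro a
    have hFint : ∀ j j' : Fin D, IntervalIntegrable
        (fun x => a j * a j' * (φ j x * φ j' x)) MeasureTheory.volume 0 1 :=
      fun j j' => (hii j j').const_mul _
    have hGint : ∀ j : Fin D, IntervalIntegrable
        (fun x => ∑ j', a j * a j' * (φ j x * φ j' x)) MeasureTheory.volume 0 1 := by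
      intro j
      have h := IntervalIntegrable.sum (μ := MeasureTheory.volume) (a := (0:ℝ)) (b := 1)
        Finset.univ (f := fun j' : Fin D => fun x => a j * a j' * (φ j x * φ j' x))
        (fun j' _ => hFint j j')
      have heq : (∑ j' : Fin D, fun x => a j * a j' * (φ j x * φ j' x))
          = fun x => ∑ j' : Fin D, a j * a j' * (φ j x * φ j' x) := by
        funext x; simp
      rwa [heq] at h
    have expand : ∀ x : ℝ, (∑ j, a j * φ j x) ^ 2
        = ∑ j, ∑ j', (a j * a j') * (φ j x * φ j' x) := by
      intro x
      rw [sq, Finset.sum_mul_sum]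
      refine Finset.sum_congr rfl fun j _ => Finset.sum_congr rfl fun j' _ => by ring
    have h1 : (∫ x in (0:ℝ)..1, ∑ j, ∑ j', a j * a j' * (φ j x * φ j' x))
        = ∑ j, ∫ x in (0:ℝ)..1, ∑ j', a j * a j' * (φ j x * φ j' x) :=
      intervalIntegral.integral_finset_sum fun j _ => hGint j
    have h2 : ∀ j : Fin D, (∫ x in (0:ℝ)..1, ∑ j', a j * a j' * (φ j x * φ j' x))
        = a j ^ 2 := by
      intro j
      rw [intervalIntegral.integral_finset_sum fun j' _ => hFint j j']
      have h4 : ∀ j' : Fin D, (∫ x in (0:ℝ)..1, a j * a j' * (φ j x * φ j' x))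
          = (a j * a j') * (if j = j' then 1 else 0) := by
        intro j'
        rw [intervalIntegral.integral_const_mul, hortho j j']
      simp_rw [h4, mul_ite, mul_one, mul_zero]
      rw [Finset.sum_ite_eq Finset.univ j (fun j' => a j * a j')]
      simp [sq]
    calc ∫ x in (0:ℝ)..1, (∑ j, a j * φ j x) ^ 2
        = ∫ x in (0:ℝ)..1, ∑ j, ∑ j', a j * a j' * (φ j x * φ j' x) := by
          simp_rw [expand]
      _ = ∑ j, ∫ x in (0:ℝ)..1, ∑ j', a j * a j' * (φ j x * φ j' x) := h1
      _ = ∑ j, a j ^ 2 := Finset.sum_congr rfl fun j _ => h2 j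
  haveI hne : Nonempty {a : Fin D → ℝ //
      ∫ x in (0 : ℝ)..1, (∑ j, a j * φ j x) ^ 2 ≤ 1} :=
    ⟨⟨0, by rw [hnorm]; simp⟩⟩
  -- pointwise bound on the supremum
  have hptwise : ∀ ω, (⨆ a : {a : Fin D → ℝ //
          ∫ x in (0 : ℝ)..1, (∑ j, a j * φ j x) ^ 2 ≤ 1},
        ((N : ℝ)⁻¹ * ∑ i ∈ Finset.range N,
          (∑ j, (a : Fin D → ℝ) j * φ j (U i ω)) * Z (i + 1) ω) ^ 2) ≤ g ω := by
    intro ω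
    refine ciSup_le fun a => ?_
    obtain ⟨a, ha⟩ := a
    have ha2 : ∑ j, a j ^ 2 ≤ 1 := by rwa [hnorm a] at ha
    have hswap : ∑ i ∈ range N, (∑ j, a j * φ j (U i ω)) * Z (i + 1) ω
        = ∑ j, a j * ∑ i ∈ range N, X j i ω := by
      simp_rw [Finset.sum_mul, mul_assoc]
      rw [Finset.sum_comm]
      exact Finset.sum_congr rfl fun j _ => (Finset.mul_sum _ _ _).symm
    simp only [hswap]
    have : (N : ℝ)⁻¹ * ∑ j, a j * ∑ i ∈ range N, X j i ω
        = ∑ j, a j * ((N : ℝ)⁻¹ * ∑ i ∈ range N, X j i ω) := by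
      rw [Finset.mul_sum]
      refine Finset.sum_congr rfl fun j _ => by ring
    rw [this]
    calc (∑ j, a j * ((N : ℝ)⁻¹ * ∑ i ∈ range N, X j i ω)) ^ 2
        ≤ (∑ j, a j ^ 2) * ∑ j, ((N : ℝ)⁻¹ * ∑ i ∈ range N, X j i ω) ^ 2 :=
          Finset.sum_mul_sq_le_sq_mul_sq _ _ _
      _ ≤ 1 * g ω := by
          refine mul_le_mul_of_nonneg_right ha2 ?_
          exact Finset.sum_nonneg fun j _ => sq_nonneg _
      _ = g ω := one_mul _
  have hnonneg : ∀ ω, (0 : ℝ) ≤ (⨆ a : {a : Fin D → ℝ //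
          ∫ x in (0 : ℝ)..1, (∑ j, a j * φ j x) ^ 2 ≤ 1},
        ((N : ℝ)⁻¹ * ∑ i ∈ Finset.range N,
          (∑ j, (a : Fin D → ℝ) j * φ j (U i ω)) * Z (i + 1) ω) ^ 2) :=
    fun ω => Real.iSup_nonneg fun a => sq_nonneg _
  -- integrate
  have hmain : ∫ ω, (⨆ a : {a : Fin D → ℝ //
          ∫ x in (0 : ℝ)..1, (∑ j, a j * φ j x) ^ 2 ≤ 1},
        ((N : ℝ)⁻¹ * ∑ i ∈ Finset.range N,
          (∑ j, (a : Fin D → ℝ) j * φ j (U i ω)) * Z (i + 1) ω) ^ 2) ∂P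
      ≤ ∫ ω, g ω ∂P :=
    integral_mono_of_nonneg (Filter.Eventually.of_forall hnonneg) hg_int
      (Filter.Eventually.of_forall hptwise)
  -- bound the integral of g
  have hZ1sq : Integrable (fun ω => Z 1 ω ^ 2) P := (hZ2 1 le_rfl hN).integrable_sq
  have hsum_m : ∑ j, m j ≤ D * ∫ ω, Z 1 ω ^ 2 ∂P := by
    have h1 : ∑ j, m j = ∫ ω, ∑ j, X j 0 ω ^ 2 ∂P :=
      (integral_finset_sum _ fun j _ => hXsq_int j 0 hN).symm
    rw [h1]
    have h2 : ∀ ω, ∑ j, X j 0 ω ^ 2 ≤ (D : ℝ) * Z 1 ω ^ 2 := by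
      intro ω
      have : ∑ j, X j 0 ω ^ 2 = (∑ j, φ j (U 0 ω) ^ 2) * Z 1 ω ^ 2 := by
        rw [Finset.sum_mul]
        refine Finset.sum_congr rfl fun j _ => by simp only [hX]; ring
      rw [this]
      exact mul_le_mul_of_nonneg_right (hsum _ (hUrange 0 hN ω)) (sq_nonneg _)
    calc ∫ ω, ∑ j, X j 0 ω ^ 2 ∂P ≤ ∫ ω, (D : ℝ) * Z 1 ω ^ 2 ∂P :=
          integral_mono (integrable_finset_sum _ fun j _ => hXsq_int j 0 hN)
            (hZ1sq.const_mul _) h2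
      _ = D * ∫ ω, Z 1 ω ^ 2 ∂P := integral_const_mul _ _
  have hgbound : ∫ ω, g ω ∂P ≤ 3 * D * (∫ ω, Z 1 ω ^ 2 ∂P) / N := by
    have h1 : ∫ ω, g ω ∂P
        = ∑ j, ∫ ω, ((N : ℝ)⁻¹ * ∑ i ∈ range N, X j i ω) ^ 2 ∂P :=
      integral_finset_sum _ fun j _ => hterm_int j
    have h2 : ∀ j : Fin D, ∫ ω, ((N : ℝ)⁻¹ * ∑ i ∈ range N, X j i ω) ^ 2 ∂P
        ≤ 3 * m j / N := by
      intro j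
      have : ∀ ω, ((N : ℝ)⁻¹ * ∑ i ∈ range N, X j i ω) ^ 2
          = ((N : ℝ)⁻¹) ^ 2 * (∑ i ∈ range N, X j i ω) ^ 2 := fun ω => by ring
      simp_rw [this]
      rw [integral_const_mul]
      have h3 := hSsq j
      have h4 : ((N : ℝ)⁻¹) ^ 2 * (3 * N * m j) = 3 * m j / N := by
        field_simp
      calc ((N : ℝ)⁻¹) ^ 2 * ∫ ω, (∑ i ∈ range N, X j i ω) ^ 2 ∂P
          ≤ ((N : ℝ)⁻¹) ^ 2 * (3 * N * m j) :=
            mul_le_mul_of_nonneg_left h3 (sq_nonneg _)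
        _ = 3 * m j / N := h4
    calc ∫ ω, g ω ∂P = ∑ j, ∫ ω, ((N : ℝ)⁻¹ * ∑ i ∈ range N, X j i ω) ^ 2 ∂P := h1
      _ ≤ ∑ j, 3 * m j / N := Finset.sum_le_sum fun j _ => h2 j
      _ = 3 * (∑ j, m j) / N := by rw [Finset.mul_sum, Finset.sum_div]
      _ ≤ 3 * (D * ∫ ω, Z 1 ω ^ 2 ∂P) / N := by
          gcongr
      _ = 3 * D * (∫ ω, Z 1 ω ^ 2 ∂P) / N := by ring
  exact hmain.trans hgbound
end
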